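/- Let (x_s,ξ_s)_{s≥0} be a curve in ℝ^d × (ℝ^d ∖ {0}) such that |d/ds (z_s, ξ_s)| ≤ C⟨x_s⟩^{−1−ε} for some ε > 0, where z_s := x_s − x₀ − (3/2)∫₀^s |ξ_σ|^{−1/2} ξ_σ dσ, and such that the Lebesgue measure of { s ≥ 0 : ⟨x_s⟩^{−1} > t } is at most C√(t^{−2}−1) for 0 < t ≤ 1. Then ∫₀^∞ ⟨x_s⟩^{−1−ε} ds < ∞, and consequently (z_s, ξ_s) converges to a limit (z_∞, ξ_∞) ∈ ℝ^d × ℝ^d as s → ∞. -/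

import Mathlib

open MeasureTheory Filter
open scoped Topology

noncomputable section

variable (d : ℕ)

abbrev Ed := EuclideanSpace ℝ (Fin d)

theorem curve_converges_at_infinity
    (x ξ : ℝ → Ed d) (z z' ξ' : ℝ → Ed d) (C ε : ℝ) (hC : 0 < C) (hε : 0 < ε)
    (hξne : ∀ s, ξ s ≠ 0)
    (hz : ∀ s : ℝ, z s =
      x s - x 0 - ((3 : ℝ) / 2) • ∫ σ in (0:ℝ)..s, ‖ξ σ‖ ^ (-(1 : ℝ) / 2) • ξ σ)
    (hz' : ∀ s, HasDerivAt z (z' s) s)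
    (hξ' : ∀ s, HasDerivAt ξ (ξ' s) s)
    (hbound : ∀ s : ℝ, 0 ≤ s →
      ‖z' s‖ + ‖ξ' s‖ ≤ C * ((1 + ‖x s‖ ^ 2) ^ ((1 : ℝ) / 2)) ^ (-(1 + ε)))
    (hmeas : ∀ t : ℝ, 0 < t → t ≤ 1 →
      volume {s : ℝ | 0 ≤ s ∧ t < ((1 + ‖x s‖ ^ 2) ^ ((1 : ℝ) / 2))⁻¹} ≤
        ENNReal.ofReal (C * Real.sqrt (t ^ (-(2 : ℝ)) - 1))) :
    IntegrableOn (fun s : ℝ => ((1 + ‖x s‖ ^ 2) ^ ((1 : ℝ) / 2)) ^ (-(1 + ε)))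
        (Set.Ici (0 : ℝ)) ∧
    ∃ zl ξl : Ed d, Tendsto (fun s => (z s, ξ s)) atTop (𝓝 (zl, ξl)) := by
  classical
  set A : ℝ → ℝ := fun s => (1 + ‖x s‖ ^ 2) ^ ((1 : ℝ) / 2) with hA
  set g : ℝ → ℝ := fun s => A s ^ (-(1 + ε)) with hgdef
  have hA1 : ∀ s, 1 ≤ A s := fun s =>
    Real.one_le_rpow (by nlinarith [sq_nonneg ‖x s‖]) (by norm_num)
  have hApos : ∀ s, 0 < A s := fun s => lt_of_lt_of_le one_pos (hA1 s)
  have hgpos : ∀ s, 0 < g s := fun s => Real.rpow_pos_of_pos (hApos s) _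
  have hgle1 : ∀ s, g s ≤ 1 := fun s =>
    Real.rpow_le_one_of_one_le_of_nonpos (hA1 s) (by linarith)
  -- continuity
  have hzc : Continuous z := continuous_iff_continuousAt.2 fun s => (hz' s).continuousAt
  have hξc : Continuous ξ := continuous_iff_continuousAt.2 fun s => (hξ' s).continuousAt
  have hhc : Continuous (fun σ => ‖ξ σ‖ ^ (-(1 : ℝ) / 2) • ξ σ) := by
    refine Continuous.smul (f := fun σ => ‖ξ σ‖ ^ (-(1 : ℝ) / 2)) ?_ hξc
    exact hξc.norm.rpow_const fun σ => Or.inl (norm_ne_zero_iff.2 (hξne σ))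
  have hIc : Continuous (fun s : ℝ => ∫ σ in (0:ℝ)..s, ‖ξ σ‖ ^ (-(1 : ℝ) / 2) • ξ σ) :=
    intervalIntegral.continuous_primitive (fun a b => hhc.intervalIntegrable a b) 0
  have hxeq : ∀ s, x s =
      z s + x 0 + ((3 : ℝ) / 2) • ∫ σ in (0:ℝ)..s, ‖ξ σ‖ ^ (-(1 : ℝ) / 2) • ξ σ := by
    intro s; rw [hz s]; abel
  have hxc : Continuous x := by
    have : Continuous (fun s =>
        z s + x 0 + ((3 : ℝ) / 2) • ∫ σ in (0:ℝ)..s, ‖ξ σ‖ ^ (-(1 : ℝ) / 2) • ξ σ) :=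
      (hzc.add continuous_const).add (by exact hIc.const_smul ((3 : ℝ) / 2))
    exact this.congr fun s => (hxeq s).symm
  have hAc : Continuous A :=
    (continuous_const.add (hxc.norm.pow 2)).rpow_const
      fun s => Or.inl (ne_of_gt (by positivity : (0:ℝ) < 1 + ‖x s‖ ^ 2))
  have hgc : Continuous g := hAc.rpow_const fun s => Or.inl (ne_of_gt (hApos s))
  -- integrability via layer cake
  set p : ℝ := 1 / (1 + ε) with hpdef
  have hp0 : 0 < p := by positivity
  have hp1 : p < 1 := by
    rw [hpdef, div_lt_one (by linarith)]; linarith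
  have hint : IntegrableOn g (Set.Ici (0:ℝ)) := by
    refine ⟨hgc.aestronglyMeasurable, ?_⟩
    rw [hasFiniteIntegral_iff_ofReal (ae_of_all _ fun s => (hgpos s).le)]
    rw [lintegral_eq_lintegral_meas_lt _ (ae_of_all _ fun s => (hgpos s).le)
      hgc.aemeasurable]
    have hfin : Integrable (fun t : ℝ => C * t ^ (-p)) (volume.restrict (Set.Ioo 0 1)) := by
      have h1 : IntervalIntegrable (fun t : ℝ => t ^ (-p)) volume 0 1 :=
        intervalIntegral.intervalIntegrable_rpow' (by linarith)
      have h2 : IntegrableOn (fun t : ℝ => t ^ (-p)) (Set.Ioo 0 1) := by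
        have := (intervalIntegrable_iff_integrableOn_Ioc_of_le (by norm_num : (0:ℝ) ≤ 1)).1 h1
        exact this.mono_set Set.Ioo_subset_Ioc_self
      exact h2.const_mul C
    have hb : ∀ t ∈ Set.Ioi (0:ℝ),
        (volume.restrict (Set.Ici (0:ℝ))) {a | t < g a}
          ≤ Set.indicator (Set.Ioo (0:ℝ) 1) (fun t => ENNReal.ofReal (C * t ^ (-p))) t := by
      intro t ht
      rcases lt_or_ge t 1 with h1 | h1
      · rw [Set.indicator_of_mem (show t ∈ Set.Ioo (0:ℝ) 1 from ⟨ht, h1⟩)]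
        rw [Measure.restrict_apply' measurableSet_Ici]
        set u : ℝ := t ^ p with hu
        have hu0 : 0 < u := Real.rpow_pos_of_pos ht p
        have hu1 : u ≤ 1 := Real.rpow_le_one (le_of_lt ht) h1.le hp0.le
        have hsub : {a | t < g a} ∩ Set.Ici 0 ⊆ {s : ℝ | 0 ≤ s ∧ u < (A s)⁻¹} := by
          rintro s ⟨hts, hs0⟩
          refine ⟨hs0, ?_⟩
          have hBnn : (0:ℝ) ≤ (A s)⁻¹ := by positivity
          have hgs : g s = ((A s)⁻¹) ^ (1 + ε) := by
            rw [Real.inv_rpow (hApos s).le, ← Real.rpow_neg (hApos s).le]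
          have hts' : t < ((A s)⁻¹) ^ (1 + ε) := by rw [← hgs]; exact hts
          have h3 := Real.rpow_lt_rpow (le_of_lt ht) hts' hp0
          rw [← Real.rpow_mul hBnn] at h3
          have he : (1 + ε) * p = 1 := by
            rw [hpdef]; field_simp
          rw [he, Real.rpow_one] at h3
          exact h3
        refine le_trans (measure_mono hsub) (le_trans (hmeas u hu0 hu1) ?_)
        refine ENNReal.ofReal_le_ofReal (mul_le_mul_of_nonneg_left ?_ hC.le)
        have hsq : Real.sqrt (u ^ (-(2:ℝ))) = u⁻¹ := by
          rw [Real.sqrt_eq_rpow, ← Real.rpow_mul hu0.le]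
          norm_num [Real.rpow_neg_one]
        calc Real.sqrt (u ^ (-(2:ℝ)) - 1) ≤ Real.sqrt (u ^ (-(2:ℝ))) :=
              Real.sqrt_le_sqrt (by linarith)
          _ = u⁻¹ := hsq
          _ = t ^ (-p) := by rw [hu, ← Real.rpow_neg ht.le]
      · rw [Set.indicator_of_notMem (by simp [h1, not_lt])]
        have hempty : {a | t < g a} = ∅ := by
          ext a; simp only [Set.mem_setOf_eq, Set.mem_empty_iff_false, iff_false, not_lt]
          exact le_trans (hgle1 a) h1
        simp [hempty]
    calc ∫⁻ t in Set.Ioi (0:ℝ), (volume.restrict (Set.Ici (0:ℝ))) {a | t < g a}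
        ≤ ∫⁻ t in Set.Ioi (0:ℝ),
            Set.indicator (Set.Ioo (0:ℝ) 1) (fun t => ENNReal.ofReal (C * t ^ (-p))) t :=
          setLIntegral_mono_ae' measurableSet_Ioi (ae_of_all _ hb)
      _ ≤ ∫⁻ t, Set.indicator (Set.Ioo (0:ℝ) 1) (fun t => ENNReal.ofReal (C * t ^ (-p))) t :=
          setLIntegral_le_lintegral _ _
      _ = ∫⁻ t in Set.Ioo (0:ℝ) 1, ENNReal.ofReal (C * t ^ (-p)) :=
          lintegral_indicator measurableSet_Ioo _
      _ < ⊤ := hfin.lintegral_lt_top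
  refine ⟨hint, ?_⟩
  -- integrability of derivatives
  have hz'me : AEStronglyMeasurable z' (volume.restrict (Set.Ioi 0)) := by
    have hzd : z' = deriv z := funext fun s => ((hz' s).deriv).symm
    rw [hzd]; exact (measurable_deriv z).aestronglyMeasurable
  have hξ'me : AEStronglyMeasurable ξ' (volume.restrict (Set.Ioi 0)) := by
    have hξd : ξ' = deriv ξ := funext fun s => ((hξ' s).deriv).symm
    rw [hξd]; exact (measurable_deriv ξ).aestronglyMeasurable
  have hgint' : IntegrableOn (fun s => C * g s) (Set.Ioi (0:ℝ)) :=
    (hint.mono_set Set.Ioi_subset_Ici_self).const_mul C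
  have hz'int : IntegrableOn z' (Set.Ioi (0:ℝ)) := by
    refine hgint'.mono' hz'me ?_
    refine (ae_restrict_iff' measurableSet_Ioi).2 (ae_of_all _ fun s hs => ?_)
    have hb := hbound s (le_of_lt hs)
    have h0 := norm_nonneg (ξ' s)
    calc ‖z' s‖ ≤ ‖z' s‖ + ‖ξ' s‖ := by linarith
      _ ≤ C * g s := hb
  have hξ'int : IntegrableOn ξ' (Set.Ioi (0:ℝ)) := by
    refine hgint'.mono' hξ'me ?_
    refine (ae_restrict_iff' measurableSet_Ioi).2 (ae_of_all _ fun s hs => ?_)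
    have hb := hbound s (le_of_lt hs)
    have h0 := norm_nonneg (z' s)
    calc ‖ξ' s‖ ≤ ‖z' s‖ + ‖ξ' s‖ := by linarith
      _ ≤ C * g s := hb
  have tendsto_of_deriv : ∀ (f f' : ℝ → Ed d), (∀ s, HasDerivAt f (f' s) s) →
      IntegrableOn f' (Set.Ioi (0:ℝ)) →
      Tendsto f atTop (𝓝 (f 0 + ∫ s in Set.Ioi (0:ℝ), f' s)) := by
    intro f f' hf hfi
    have h1 : Tendsto (fun b => ∫ s in (0:ℝ)..b, f' s) atTop
        (𝓝 (∫ s in Set.Ioi (0:ℝ), f' s)) :=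
      intervalIntegral_tendsto_integral_Ioi 0 hfi tendsto_id
    have h2 := tendsto_const_nhds.add h1 (f := fun _ : ℝ => f 0)
    refine h2.congr' ?_
    filter_upwards [eventually_ge_atTop (0:ℝ)] with b hb
    have hFTC : ∫ s in (0:ℝ)..b, f' s = f b - f 0 :=
      intervalIntegral.integral_eq_sub_of_hasDerivAt (fun t _ => hf t)
        (intervalIntegrable_iff.2 (by
          rw [Set.uIoc_of_le hb]
          exact hfi.mono_set Set.Ioc_subset_Ioi_self))
    rw [hFTC]; abel
  exact ⟨_, _, (tendsto_of_deriv z z' hz' hz'int).prodMk_nhds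
    (tendsto_of_deriv ξ ξ' hξ' hξ'int)⟩
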